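/- Let γ = (a, b; c, d) ∈ SL₂(ℤ) with c > 0 and c ≡ 0 (mod 4), and let α, β ∈ {0,1}. Let M be the 2×2 complex matrix M = [[1, 0], [0, i^{ab}]]. Then ε_a^{−1} · (c/a) · M_{αβ} = (1/4) Σ_{δ} (c/δ) ε_δ^{−1} e(α(a−δ̄)/(4c)) e(β(d−δ)/(4c)), where δ runs over the odd residues modulo 4c with δ ≡ d (mod c), δ̄ denotes the inverse of δ modulo 4c, (c/a) and (c/δ) are Jacobi symbols (a is odd since ad − bc = 1 and c is even), ε_x := 1 if x ≡ 1 (mod 4) and i if x ≡ 3 (mod 4), and e(x) := e^{2πix}. -/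

import Mathlib

open Complex

/-- `e(x) = e^{2πix}`. -/
noncomputable def eE (x : ℂ) : ℂ := Complex.exp (2 * Real.pi * Complex.I * x)

/-- `ε_d = 1` if `d ≡ 1 (mod 4)`, `ε_d = i` if `d ≡ 3 (mod 4)` (for odd `d : ℕ`). -/
noncomputable def epsN (d : ℕ) : ℂ := if d % 4 = 1 then 1 else Complex.I

/-- `ε_x = 1` if `x ≡ 1 (mod 4)`, `ε_x = i` if `x ≡ 3 (mod 4)` (for odd `x : ℤ`). -/
noncomputable def epsZ (x : ℤ) : ℂ := if x % 4 = 1 then 1 else Complex.I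

lemma eE_intdiv4 (s : ℤ) : eE ((s : ℂ) / 4) = Complex.I ^ s := by
  have h : (2 * Real.pi * Complex.I * ((s : ℂ) / 4)) = (s : ℤ) * (Real.pi / 2 * Complex.I) := by
    ring
  rw [eE, h, Complex.exp_int_mul]
  congr 1
  have h2 : ((Real.pi : ℂ) / 2) = ((Real.pi / 2 : ℝ) : ℂ) := by push_cast; ring
  rw [Complex.exp_mul_I, h2, ← Complex.ofReal_cos, ← Complex.ofReal_sin]
  simp

lemma I_zpow_mod (s : ℤ) : Complex.I ^ s = Complex.I ^ (s % 4) := by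
  conv_lhs => rw [← Int.emod_add_mul_ediv s 4]
  have h4 : Complex.I ^ (4:ℤ) = 1 := by
    rw [show ((4:ℤ)) = ((4:ℕ):ℤ) by norm_num, zpow_natCast]; norm_num
  rw [zpow_add₀ Complex.I_ne_zero, zpow_mul, h4, one_zpow, mul_one]

lemma I_zpow_congr {x y : ℤ} (h : x % 4 = y % 4) : Complex.I ^ x = Complex.I ^ y := by
  rw [I_zpow_mod x, I_zpow_mod y, h]

lemma I_zpow_two : Complex.I ^ (2:ℤ) = -1 := by
  rw [show (2:ℤ) = ((2:ℕ):ℤ) by norm_num, zpow_natCast]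
  simp [Complex.I_sq]

lemma I_zpow_three : Complex.I ^ (3:ℤ) = -Complex.I := by
  rw [show (3:ℤ) = (2:ℤ) + 1 by norm_num, zpow_add₀ Complex.I_ne_zero, I_zpow_two, zpow_one]
  ring

lemma I_zpow_sum_sub (t : ℤ) : Complex.I ^ t + Complex.I ^ (t-1) + Complex.I ^ (t-2)
    + Complex.I ^ (t-3) = 0 := by
  have h1 : ∀ k : ℤ, Complex.I ^ (t - k) = Complex.I ^ t / Complex.I ^ k := fun k =>
    zpow_sub₀ Complex.I_ne_zero _ _
  rw [h1 1, h1 2, h1 3, zpow_one, I_zpow_two, I_zpow_three]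
  have := Complex.I_ne_zero
  field_simp
  linear_combination

lemma I_zpow_sum_add (s : ℤ) : Complex.I ^ s + Complex.I ^ (s+1) + Complex.I ^ (s+2)
    + Complex.I ^ (s+3) = 0 := by
  have h1 : ∀ k : ℤ, Complex.I ^ (s + k) = Complex.I ^ s * Complex.I ^ k := fun k =>
    zpow_add₀ Complex.I_ne_zero _ _
  rw [h1 1, h1 2, h1 3, zpow_one, I_zpow_two, I_zpow_three]
  ring

lemma jac_period {N : ℕ} (h4 : 4 ∣ N) {m n : ℕ} (hm : Odd m) (hn : Odd n)
    (h : m % N = n % N) : jacobiSym (N : ℤ) m = jacobiSym (N : ℤ) n := by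
  obtain ⟨K, rfl⟩ := h4
  rw [← jacobiSym.div_four_left (a := ((4*K:ℕ):ℤ)) (by push_cast; omega) (Nat.odd_iff.mp hm),
      ← jacobiSym.div_four_left (a := ((4*K:ℕ):ℤ)) (by push_cast; omega) (Nat.odd_iff.mp hn),
      show ((4 * K : ℕ) : ℤ) / 4 = (K : ℤ) by push_cast; omega,
      jacobiSym.mod_right' K hm, jacobiSym.mod_right' K hn, h]

lemma jac_odd_neg {u m : ℕ} (hu : Odd u) (hm4 : m % 4 = 3)
    (hmu : ((m : ℤ)) % u = (-1) % u) : jacobiSym (u : ℤ) m = 1 := by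
  have hm : Odd m := Nat.odd_iff.mpr (by omega)
  rw [jacobiSym.quadratic_reciprocity' hu hm, jacobiSym.mod_left' hmu,
    jacobiSym.at_neg_one hu, qrSign, ZMod.χ₄_nat_three_mod_four hm4,
    jacobiSym.at_neg_one hu, ZMod.χ₄_eq_neg_one_pow (Nat.odd_iff.mp hu), ← pow_add]
  exact Even.neg_one_pow (Even.add_self _)

lemma jac_neg_mod : ∀ N : ℕ, 4 ∣ N → ∀ m : ℕ, Odd m →
    ((m : ℤ)) % N = (-1) % N → jacobiSym (N : ℤ) m = 1 := by
  intro N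
  induction N using Nat.strong_induction_on with
  | _ N IH =>
    intro h4 m hm hcong
    obtain ⟨K, rfl⟩ := h4
    have hm2 : m % 2 = 1 := Nat.odd_iff.mp hm
    rcases Nat.eq_zero_or_pos K with rfl | hK0
    · exfalso; rw [show ((4*0:ℕ):ℤ) = 0 by norm_num, Int.emod_zero, Int.emod_zero] at hcong
      omega
    rw [← jacobiSym.div_four_left (a := ((4*K:ℕ):ℤ)) (by push_cast; omega) hm2,
      show ((4 * K : ℕ) : ℤ) / 4 = (K : ℤ) by push_cast; omega]
    have hdvd : (K : ℤ) ∣ ((4 * K : ℕ) : ℤ) := by push_cast; exact ⟨4, by ring⟩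
    have hcongK : ((m : ℤ)) % K = (-1) % K := Int.ModEq.of_dvd hdvd hcong
    have hm4 : m % 4 = 3 := by
      have h4' : (4 : ℤ) ∣ ((4 * K : ℕ) : ℤ) := by push_cast; exact ⟨K, rfl⟩
      have h : (m:ℤ) % 4 = -1 % 4 := Int.ModEq.of_dvd h4' hcong
      omega
    rcases Nat.even_or_odd K with hKe | hKo
    · rcases Nat.even_or_odd (K / 2) with hK2e | hK2o
      · have h4K : 4 ∣ K := by
          obtain ⟨j, hj⟩ := hKe; obtain ⟨l, hl⟩ := hK2e; omega
        exact IH K (by omega) h4K m hm hcongK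
      · obtain ⟨u, hu⟩ : ∃ u, K = 2 * u := ⟨K/2, by obtain ⟨j, hj⟩ := hKe; omega⟩
        have huo : Odd u := by rw [hu] at hK2o; simpa using hK2o
        have hm8 : m % 8 = 7 := by
          have h8' : (8 : ℤ) ∣ ((4 * K : ℕ) : ℤ) := by
            push_cast [hu]; exact ⟨u, by ring⟩
          have h : (m:ℤ) % 8 = -1 % 8 := Int.ModEq.of_dvd h8' hcong
          omega
        rw [hu, show ((2 * u : ℕ) : ℤ) = 2 * (u : ℤ) by push_cast; ring,
          jacobiSym.mul_left, jacobiSym.at_two hm, ZMod.χ₈_nat_eq_if_mod_eight]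
        have hcongu : ((m : ℤ)) % u = (-1) % u :=
          Int.ModEq.of_dvd (by push_cast [hu]; exact ⟨8, by ring⟩) hcong
        rw [jac_odd_neg huo hm4 hcongu]
        simp [hm2, hm8]
    · exact jac_odd_neg hKo hm4 hcongK

/-- for `γ = (a,b;c,d) ∈ SL₂(ℤ)` with `c > 0`, `c ≡ 0 (mod 4)`,
`α β ∈ {0,1}`, and `M = [[1, 0],[0, i^{ab}]]`, one has
`ε_a⁻¹ (c/a) M_{αβ}
  = (1/4) ∑_{δ (mod 4c), δ odd, δ ≡ d (mod c)} (c/δ) ε_δ⁻¹ e(α(a-δ̄)/(4c)) e(β(d-δ)/(4c))`,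
where `δ̄` is the inverse of `δ` modulo `4c`. -/
theorem weil_rep_entry_c_zero_mod_four (a b d : ℤ) (c : ℕ) (hc : 0 < c) (hc4 : c % 4 = 0)
    (hdet : a * d - b * (c : ℤ) = 1) (α β : Fin 2) :
    (epsZ a)⁻¹ * (jacobiSym (c : ℤ) a.natAbs : ℂ) *
        (!![1, 0; 0, Complex.I ^ (a * b)] α β) =
      1 / 4 *
        ∑ δ ∈ (Finset.range (4 * c)).filter
            (fun δ : ℕ => δ % 2 = 1 ∧ ((δ : ZMod c) = ((d : ℤ) : ZMod c))),
          (jacobiSym (c : ℤ) δ : ℂ) * (epsN δ)⁻¹ *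
            eE (((α : ℕ) : ℂ) * ((a : ℂ) - ((((δ : ZMod (4 * c))⁻¹ : ZMod (4 * c)).val : ℕ) : ℂ)) /
              (4 * (c : ℂ))) *
            eE (((β : ℕ) : ℂ) * ((d : ℂ) - (δ : ℂ)) / (4 * (c : ℂ))) := by
  haveI : NeZero c := ⟨hc.ne'⟩
  have hc4' : (4:ℕ) ∣ c := Nat.dvd_of_mod_eq_zero hc4
  have hcz : (c : ℂ) ≠ 0 := Nat.cast_ne_zero.mpr hc.ne'
  have had : a * d = 1 + b * (c:ℤ) := by linarith
  have hce : (2:ℤ) ∣ (c:ℤ) := by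
    obtain ⟨c', rfl⟩ := hc4'; push_cast; exact ⟨2*c', by ring⟩
  have hado : Odd (a*d) := by
    obtain ⟨e, he⟩ := hce
    exact ⟨b*e, by rw [had, he]; ring⟩
  have hao : Odd a := (Int.odd_mul.mp hado).1
  have hdo : Odd d := (Int.odd_mul.mp hado).2
  set d₁ : ℕ := ((d : ZMod c)).val with hd₁def
  have hd₁ : (d₁ : ℤ) = d % c := ZMod.val_intCast d
  have hd₁lt : d₁ < c := ZMod.val_lt _
  have hd₁odd : d₁ % 2 = 1 := by
    have h1 := Int.emod_emod_of_dvd d hce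
    have h2 : d % 2 = 1 := Int.odd_iff.mp hdo
    omega
  have hcd₁ : (c:ℤ) ∣ (d - d₁) := ⟨d / c, by rw [hd₁, Int.emod_def]; ring⟩
  obtain ⟨t₀, ht₀⟩ := hcd₁
  -- coprimality
  have hacd : (c:ℤ) ∣ (a * d₁ - 1) := by
    obtain ⟨e, he⟩ : (c:ℤ) ∣ (a * d₁ - a * d) := ⟨-(a * t₀), by rw [show a * (d₁:ℤ) - a * d = -(a*(d - d₁)) by ring, ht₀]; ring⟩
    exact ⟨e + b, by rw [show a * (d₁:ℤ) - 1 = (a * d₁ - a * d) + (a * d - 1) by ring, he, had]; ring⟩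
  have hcopZ : IsCoprime ((d₁:ℤ)) ((c:ℤ)) := by
    obtain ⟨e, he⟩ := hacd
    exact ⟨a, -e, by linarith⟩
  have hcop1 : Nat.Coprime d₁ c := by
    have := Int.isCoprime_iff_gcd_eq_one.mp hcopZ
    rwa [Int.gcd_natCast_natCast] at this
  have hodd_cop4 : ∀ m : ℕ, m % 2 = 1 → Nat.Coprime m 4 := by
    intro m hm
    have h2 : Nat.Coprime m 2 :=
      (Nat.coprime_comm.mp ((Nat.prime_two.coprime_iff_not_dvd).mpr (by omega)))
    simpa using h2.pow_right 2
  -- the summation set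
  have hS : (Finset.range (4 * c)).filter
        (fun δ : ℕ => δ % 2 = 1 ∧ ((δ : ZMod c) = ((d : ℤ) : ZMod c)))
      = (Finset.range 4).image (fun k => d₁ + k * c) := by
    ext δ
    simp only [Finset.mem_filter, Finset.mem_range, Finset.mem_image]
    constructor
    · rintro ⟨hlt, hodd, hcong⟩
      have hmod : δ % c = d₁ := by
        have := congrArg ZMod.val hcong
        rwa [ZMod.val_natCast] at this
      refine ⟨δ / c, ?_, ?_⟩
      · rw [Nat.div_lt_iff_lt_mul hc]; omega
      · have h := Nat.mod_add_div' δ c; omega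
    · rintro ⟨k, hk, rfl⟩
      have hkc : k * c ≤ 3 * c := Nat.mul_le_mul_right c (by omega)
      have h2kc : 2 ∣ k * c := Dvd.dvd.mul_left (by omega) k
      refine ⟨by omega, by omega, ?_⟩
      push_cast
      rw [ZMod.natCast_self, mul_zero, add_zero]
      exact (ZMod.natCast_rightInverse ((d : ℤ) : ZMod c) : _)
  rw [hS, Finset.sum_image (by
    intro x hx y hy h
    beta_reduce at h
    exact Nat.eq_of_mul_eq_mul_right hc (by omega))]
  haveI : NeZero (4 * c) := ⟨by omega⟩
  have hc2 : (2:ℕ) ∣ c := dvd_trans (by norm_num) hc4'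
  have hδodd : ∀ k : ℕ, (d₁ + k * c) % 2 = 1 := by
    intro k; have : 2 ∣ k * c := hc2.mul_left k; omega
  have hδmod4 : ∀ k : ℕ, (d₁ + k * c) % 4 = d₁ % 4 := by
    intro k; have : 4 ∣ k * c := hc4'.mul_left k; omega
  have hJ : ∀ k : ℕ, jacobiSym (c:ℤ) (d₁ + k * c) = jacobiSym (c:ℤ) d₁ := by
    intro k
    exact jac_period hc4' (Nat.odd_iff.mpr (hδodd k)) (Nat.odd_iff.mpr hd₁odd)
      (by rw [Nat.add_mul_mod_self_right])
  have heps : ∀ k : ℕ, epsN (d₁ + k * c) = epsN d₁ := by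
    intro k; rw [epsN, epsN, hδmod4 k]
  have hcopk : ∀ k : ℕ, Nat.Coprime (d₁ + k * c) (4 * c) := by
    intro k
    have h1 : Nat.Coprime (d₁ + k * c) c := by
      exact (Nat.coprime_add_mul_right_left d₁ c k).mpr hcop1
    exact Nat.Coprime.mul_right (hodd_cop4 _ (hδodd k)) h1
  set v : ℕ → ℕ := fun k => (((d₁ + k * c : ℕ) : ZMod (4 * c))⁻¹).val with hvdef
  have hvinv : ∀ k : ℕ, ((v k : ZMod (4 * c))) = ((d₁ + k * c : ℕ) : ZMod (4 * c))⁻¹ :=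
    fun k => ZMod.natCast_rightInverse _
  have hvmul : ∀ k : ℕ, ((d₁ + k * c : ℕ) : ZMod (4 * c)) * (v k : ZMod (4 * c)) = 1 := by
    intro k; rw [hvinv k]; exact ZMod.coe_mul_inv_eq_one _ (hcopk k)
  have hvmulZ : ∀ k : ℕ, (((4:ℕ) * c : ℕ):ℤ) ∣ (((d₁:ℤ) + k * c) * (v k : ℤ) - 1) := by
    intro k
    rw [← ZMod.intCast_zmod_eq_zero_iff_dvd]
    have hk := hvmul k
    push_cast at hk ⊢
    rw [hk]; ring
  have hvodd : ∀ k : ℕ, (v k) % 2 = 1 := by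
    intro k
    obtain ⟨e, he⟩ := hvmulZ k
    have h2 : (2:ℤ) ∣ ((4:ℕ) * c : ℕ) := by push_cast; exact ⟨2*c, by ring⟩
    have hprod : Odd (((d₁:ℤ) + k * c) * (v k : ℤ)) := by
      obtain ⟨f, hf⟩ := h2
      exact ⟨e * f, by rw [show ((d₁:ℤ) + k*c) * (v k:ℤ) = (((4:ℕ)*c:ℕ):ℤ) * e + 1 by linarith, hf]; ring⟩
    have := (Int.odd_mul.mp hprod).2
    have := Int.odd_iff.mp this
    omega
  -- congruence for inverses
  have hvcong : ∀ k : ℕ, (((4:ℕ) * c : ℕ):ℤ) ∣ ((v k : ℤ) - ((v 0 : ℤ) - k * c * (v 0 : ℤ)^2)) := by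
    intro k
    have hcc : ((c * c : ℕ) : ZMod (4 * c)) = 0 := by
      rw [ZMod.natCast_eq_zero_iff]
      obtain ⟨c', rfl⟩ := hc4'
      exact ⟨c', by ring⟩
    have hCC : ((c:ℕ) : ZMod (4*c)) * ((c:ℕ) : ZMod (4*c)) = 0 := by
      rw [← Nat.cast_mul]; exact hcc
    have hDV : ((d₁ : ZMod (4*c))) * (v 0 : ZMod (4*c)) = 1 := by
      have := hvmul 0
      push_cast at this
      convert this using 2 <;> push_cast <;> ring
    have hEq : (((d₁ + k * c : ℕ)) : ZMod (4*c)) *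
        ((v 0 : ZMod (4*c)) - (k:ℕ) * (c:ℕ) * (v 0 : ZMod (4*c))^2) = 1 := by
      push_cast
      linear_combination (1 - (k:ZMod (4*c)) * (c:ZMod (4*c)) * (v 0 : ZMod (4*c))) * hDV
        + (-((k:ZMod (4*c))^2 * ((v 0 : ZMod (4*c)))^2)) * hCC
    have hZ : ((v k : ZMod (4*c))) =
        (v 0 : ZMod (4*c)) - (k:ℕ) * (c:ℕ) * (v 0 : ZMod (4*c))^2 := by
      calc ((v k : ZMod (4*c))) = (v k : ZMod (4*c)) * ((((d₁ + k * c : ℕ)) : ZMod (4*c)) *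
            ((v 0 : ZMod (4*c)) - (k:ℕ) * (c:ℕ) * (v 0 : ZMod (4*c))^2)) := by rw [hEq, mul_one]
        _ = ((((d₁ + k * c : ℕ)) : ZMod (4*c)) * (v k : ZMod (4*c))) *
            ((v 0 : ZMod (4*c)) - (k:ℕ) * (c:ℕ) * (v 0 : ZMod (4*c))^2) := by ring
        _ = _ := by rw [hvmul k, one_mul]
    rw [← ZMod.intCast_zmod_eq_zero_iff_dvd]
    push_cast at hZ ⊢
    rw [hZ]; ring
  -- exact quotients
  have hca : ∀ k : ℕ, (c:ℤ) ∣ (a - (v k : ℤ)) := by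
    intro k
    have h1 : (c:ℤ) ∣ (1 - ((d₁:ℤ) + k * c) * (v k : ℤ)) := by
      obtain ⟨e, he⟩ := hvmulZ k
      exact ⟨-4 * e, by push_cast at he; linarith⟩
    have h2 : (c:ℤ) ∣ (a * ((d₁:ℤ) + k * c) - 1) := by
      obtain ⟨e, he⟩ := hacd
      exact ⟨e + a * k, by linarith [he]⟩
    obtain ⟨e1, he1⟩ := h1
    obtain ⟨e2, he2⟩ := h2
    exact ⟨a * e1 + (v k : ℤ) * e2, by
      have : a - (v k:ℤ) = a * (1 - ((d₁:ℤ) + k * c) * (v k : ℤ))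
          + (v k : ℤ) * (a * ((d₁:ℤ) + k * c) - 1) := by ring
      rw [this, he1, he2]; ring⟩
  obtain ⟨s₀, hs₀⟩ := hca 0
  have h4v : (4:ℤ) ∣ ((v 0 : ℤ)^2 - 1) := by
    have := hvodd 0
    obtain ⟨j, hj⟩ : ∃ j : ℤ, (v 0 : ℤ) = 2 * j + 1 := ⟨(v 0 : ℤ) / 2, by omega⟩
    exact ⟨j * j + j, by rw [hj]; ring⟩
  have hs : ∀ k : ℕ, ∃ s : ℤ, a - (v k : ℤ) = c * s ∧ s % 4 = (s₀ + k) % 4 := by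
    intro k
    obtain ⟨s, hsk⟩ := hca k
    refine ⟨s, hsk, ?_⟩
    obtain ⟨e, he⟩ := hvcong k
    obtain ⟨w, hw⟩ := h4v
    have hcnz : (c:ℤ) ≠ 0 := by exact_mod_cast hc.ne'
    have hkey : s = s₀ + k + 4 * (k * w - e) := by
      apply mul_left_cancel₀ hcnz
      push_cast at he
      linear_combination hs₀ - hsk - he + (k:ℤ)*(c:ℤ)*hw
    omega
  -- scalar identities
  have hc4Z : (4:ℤ) ∣ (c:ℤ) := by exact_mod_cast Int.natCast_dvd_natCast.mpr hc4'
  have ha2 : a % 2 = 1 := Int.odd_iff.mp hao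
  have hd2 : d % 2 = 1 := Int.odd_iff.mp hdo
  have had4 : (a * d) % 4 = 1 := by
    obtain ⟨e, he⟩ := hc4Z
    have h : a * d = 1 + 4 * (b * e) := by rw [had, he]; ring
    omega
  have hd₁4 : (d₁ : ℤ) % 4 = d % 4 := by
    rw [hd₁]; exact Int.emod_emod_of_dvd d hc4Z
  have had4' : a % 4 = (d₁:ℤ) % 4 := by
    have hmul := Int.mul_emod a d 4
    have h1 : a % 4 = 1 ∨ a % 4 = 3 := by omega
    have h2 : d % 4 = 1 ∨ d % 4 = 3 := by omega
    rcases h1 with h1 | h1 <;> rcases h2 with h2 | h2 <;>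
      rw [h1, h2] at hmul <;> omega
  have hepsad : epsZ a = epsN d₁ := by
    rw [epsZ, epsN]
    by_cases h : a % 4 = 1
    · rw [if_pos h, if_pos (by omega)]
    · rw [if_neg h, if_neg (by omega)]
  have hgcd : Int.gcd ((c:ℕ):ℤ) ((d₁:ℕ):ℤ) = 1 := by
    rw [Int.gcd_natCast_natCast]; exact Nat.coprime_comm.mp hcop1
  have hJpm : jacobiSym (c:ℤ) d₁ = 1 ∨ jacobiSym (c:ℤ) d₁ = -1 :=
    jacobiSym.eq_one_or_neg_one hgcd
  have hNodd : (a.natAbs * d₁) % 2 = 1 :=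
    Nat.odd_iff.mp (Nat.odd_mul.mpr ⟨Int.natAbs_odd.mpr hao, Nat.odd_iff.mpr hd₁odd⟩)
  have hprod : jacobiSym (c:ℤ) (a.natAbs * d₁) = 1 := by
    obtain ⟨e, he⟩ := hacd
    rcases le_or_gt 0 a with hge | hlt
    · have hcongr : (a.natAbs * d₁) % c = 1 % c := by
        have hZc : ((a.natAbs * d₁ : ℕ) : ℤ) % c = (1:ℤ) % c := by
          have hcast : ((a.natAbs * d₁ : ℕ) : ℤ) = 1 + (c:ℤ) * e := by
            push_cast [Int.natAbs_of_nonneg hge]; linarith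
          rw [hcast, Int.add_mul_emod_self_left]
        exact_mod_cast hZc
      exact (jac_period hc4' (Nat.odd_iff.mpr hNodd) odd_one hcongr).trans
        (jacobiSym.one_right _)
    · apply jac_neg_mod c hc4' _ (Nat.odd_iff.mpr hNodd)
      have hcast : ((a.natAbs * d₁ : ℕ) : ℤ) = -1 + (c:ℤ) * (-e) := by
        have : ((a.natAbs : ℕ) : ℤ) = -a := Int.ofNat_natAbs_of_nonpos (le_of_lt hlt)
        push_cast [this]; linarith
      rw [hcast, Int.add_mul_emod_self_left]
  have hmulJ : jacobiSym (c:ℤ) (a.natAbs * d₁) =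
      jacobiSym (c:ℤ) a.natAbs * jacobiSym (c:ℤ) d₁ :=
    jacobiSym.mul_right' _ (by simpa using (Int.natAbs_pos.mpr (by rintro rfl; simp at ha2)).ne') (by omega)
  have hJa : jacobiSym (c:ℤ) a.natAbs = jacobiSym (c:ℤ) d₁ := by
    have h1 : jacobiSym (c:ℤ) a.natAbs * jacobiSym (c:ℤ) d₁ = 1 := by
      rw [← hmulJ]; exact hprod
    rcases hJpm with h | h <;> rw [h] at h1 ⊢ <;> linarith
  have hmainEq : (epsZ a)⁻¹ * ((jacobiSym (c:ℤ) a.natAbs : ℤ) : ℂ) =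
      ((jacobiSym (c:ℤ) d₁ : ℤ) : ℂ) * (epsN d₁)⁻¹ := by
    rw [hJa, hepsad]; ring
  -- b in terms of the data
  obtain ⟨M, hM⟩ := hvmulZ 0
  have hcnz : (c:ℤ) ≠ 0 := by exact_mod_cast hc.ne'
  have hb : b = 4 * M + (v 0 : ℤ) * t₀ + s₀ * d₁ + (c:ℤ) * s₀ * t₀ := by
    apply mul_left_cancel₀ hcnz
    push_cast at hM
    linear_combination (-1:ℤ) * had + d * hs₀ + ((v 0:ℤ) + (c:ℤ)*s₀) * ht₀ + hM
  have habmod : (a * b) % 4 = (s₀ + t₀) % 4 := by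
    obtain ⟨w, hw⟩ := h4v
    obtain ⟨e2, he2⟩ := hc4Z
    obtain ⟨E, hE⟩ := hacd
    have hkey : a * b = s₀ + t₀ +
        4 * (a*M + w*t₀ + e2*s₀*(v 0:ℤ)*t₀ + e2*s₀*E + e2*a*s₀*t₀) := by
      linear_combination a*hb + t₀*(v 0:ℤ)*hs₀ + t₀*hw + s₀*hE +
        (s₀*(v 0:ℤ)*t₀ + s₀*E + a*s₀*t₀)*he2
    omega
  have hab : Complex.I ^ (a * b) = Complex.I ^ (s₀ + t₀) := I_zpow_congr habmod
  -- evaluate the exponential factors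
  have hβpart : ∀ k : ℕ, eE (((β:ℕ):ℂ) * ((d:ℂ) - ((d₁ + k * c : ℕ):ℂ)) / (4 * (c:ℂ)))
      = Complex.I ^ (((β:ℕ):ℤ) * (t₀ - k)) := by
    intro k
    have hint : ((β:ℕ):ℤ) * (d - ((d₁ + k * c : ℕ):ℤ)) = (c:ℤ) * (((β:ℕ):ℤ) * (t₀ - k)) := by
      push_cast
      linear_combination ((β:ℕ):ℤ) * ht₀
    have hC : (((β:ℕ)):ℂ) * ((d:ℂ) - ((d₁ + k * c : ℕ):ℂ))
        = (c:ℂ) * ((((β:ℕ):ℤ) * (t₀ - k) : ℤ):ℂ) := by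
      exact_mod_cast congrArg (fun z : ℤ => (z : ℂ)) hint
    rw [hC, show (4:ℂ) * (c:ℂ) = (c:ℂ) * 4 by ring, mul_div_mul_left _ _ hcz, eE_intdiv4]
  have hαpart : ∀ k : ℕ, eE (((α:ℕ):ℂ) * ((a:ℂ) - ((v k : ℕ):ℂ)) / (4 * (c:ℂ)))
      = Complex.I ^ (((α:ℕ):ℤ) * (s₀ + k)) := by
    intro k
    obtain ⟨s, hsk, hsmod⟩ := hs k
    have hint : ((α:ℕ):ℤ) * (a - ((v k : ℕ):ℤ)) = (c:ℤ) * (((α:ℕ):ℤ) * s) := by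
      linear_combination ((α:ℕ):ℤ) * hsk
    have hC : (((α:ℕ)):ℂ) * ((a:ℂ) - ((v k:ℕ):ℂ)) = (c:ℂ) * ((((α:ℕ):ℤ) * s : ℤ):ℂ) := by
      exact_mod_cast congrArg (fun z : ℤ => (z : ℂ)) hint
    rw [hC, show (4:ℂ) * (c:ℂ) = (c:ℂ) * 4 by ring, mul_div_mul_left _ _ hcz, eE_intdiv4]
    refine I_zpow_congr ?_
    have hα01 : ((α:ℕ):ℤ) = 0 ∨ ((α:ℕ):ℤ) = 1 := by
      have := α.isLt; omega
    rcases hα01 with h | h <;> rw [h]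
    · simp
    · simpa using hsmod
  -- rewrite the sum
  have hsum : ∑ x ∈ Finset.range 4,
        (jacobiSym (c:ℤ) (d₁ + x * c) : ℂ) * (epsN (d₁ + x * c))⁻¹ *
          eE (((α : ℕ) : ℂ) * ((a:ℂ) - ((((d₁ + x * c : ℕ) : ZMod (4 * c))⁻¹).val : ℂ)) / (4 * (c:ℂ))) *
          eE (((β : ℕ) : ℂ) * ((d:ℂ) - ((d₁ + x * c : ℕ) : ℂ)) / (4 * (c:ℂ)))
      = ∑ x ∈ Finset.range 4,
        ((jacobiSym (c:ℤ) d₁ : ℂ) * (epsN d₁)⁻¹ *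
          (Complex.I ^ (((α:ℕ):ℤ) * (s₀ + x)) * Complex.I ^ (((β:ℕ):ℤ) * (t₀ - x)))) := by
    refine Finset.sum_congr rfl fun k hk => ?_
    have h1 := hαpart k
    simp only [hvdef] at h1
    rw [hJ k, heps k, h1, hβpart k]
    ring
  rw [hsum]
  rw [Finset.sum_range_succ, Finset.sum_range_succ, Finset.sum_range_succ,
    Finset.sum_range_one]
  push_cast
  fin_cases α <;> fin_cases β <;>
    simp only [Matrix.cons_val', Matrix.cons_val_zero, Matrix.cons_val_one, Matrix.head_cons,
      Matrix.empty_val', Matrix.cons_val_fin_one, Matrix.head_fin_const, Fin.isValue,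
      Fin.val_zero, Fin.val_one] <;>
    push_cast
  · -- α = 0, β = 0
    have hent : (!![(1:ℂ), 0; 0, Complex.I ^ (a * b)] : Matrix (Fin 2) (Fin 2) ℂ) 0 0 = 1 := rfl
    simp only [Fin.zero_eta, Fin.mk_one, hent, zero_mul, zpow_zero, mul_one, one_mul]
    rw [hJa, hepsad]; ring
  · -- α = 0, β = 1
    have hent : (!![(1:ℂ), 0; 0, Complex.I ^ (a * b)] : Matrix (Fin 2) (Fin 2) ℂ) 0 1 = 0 := rfl
    simp only [Fin.zero_eta, Fin.mk_one, hent, zero_mul, zpow_zero, one_mul, mul_one, sub_zero]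
    have h := I_zpow_sum_sub t₀
    linear_combination (-(1/4) * ((jacobiSym (c:ℤ) d₁ : ℤ) : ℂ) * (epsN d₁)⁻¹) * h
  · -- α = 1, β = 0
    have hent : (!![(1:ℂ), 0; 0, Complex.I ^ (a * b)] : Matrix (Fin 2) (Fin 2) ℂ) 1 0 = 0 := rfl
    simp only [Fin.zero_eta, Fin.mk_one, hent, zero_mul, zpow_zero, one_mul, mul_one, add_zero]
    have h := I_zpow_sum_add s₀
    linear_combination (-(1/4) * ((jacobiSym (c:ℤ) d₁ : ℤ) : ℂ) * (epsN d₁)⁻¹) * h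
  · -- α = 1, β = 1
    have hent : (!![(1:ℂ), 0; 0, Complex.I ^ (a * b)] : Matrix (Fin 2) (Fin 2) ℂ) 1 1
        = Complex.I ^ (a * b) := rfl
    have hcomb : ∀ k : ℤ, Complex.I ^ (s₀ + k) * Complex.I ^ (t₀ - k)
        = Complex.I ^ (s₀ + t₀) := fun k => by
      rw [← zpow_add₀ Complex.I_ne_zero]
      exact I_zpow_congr (by omega)
    simp only [Fin.zero_eta, Fin.mk_one, hent, one_mul]
    rw [hcomb 0, hcomb 1, hcomb 2, hcomb 3, hab, hJa, hepsad]
    ring
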